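/- Let X_1, …, X_n be independent Bernoulli random variables with common mean μ ∈ (0,1), let μ̂ = (1/n)·Σ_{i=1}^n X_i, and fix α > 0. Define the KL upper confidence limit p̃_α = max{ p ∈ [μ̂, 1] : D_KL(μ̂ ‖ p) ≤ α } (the maximum exists since p ↦ D_KL(μ̂‖p) is continuous and increasing on [μ̂, 1)). Then P( μ ≥ p̃_α ) ≤ exp(−n·α); equivalently, p̃_α is a level-(1 − e^{−nα}) lower confidence bound certificate, in the sense that the true mean μ exceeds p̃_α with probability at most exp(−n·α). -/

import Mathlib

open MeasureTheory ProbabilityTheory Finset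

/-- KL divergence between Bernoulli(a) and Bernoulli(b), with the convention
`0·log 0 = 0` (automatic in Lean since `Real.log 0 = 0`). -/
noncomputable def klBern (a b : ℝ) : ℝ :=
  a * Real.log (a / b) + (1 - a) * Real.log ((1 - a) / (1 - b))

/-- Extended-real-valued Bernoulli KL divergence, implementing the convention
`D_KL(a ‖ 1) = +∞` for `a < 1`. -/
noncomputable def klBernE (a b : ℝ) : EReal :=
  if b = 1 ∧ a < 1 then ⊤ else (klBern a b : EReal)

lemma klBern_eq' (a b : ℝ) (hb0 : b ≠ 0) (hb1 : b ≠ 1) :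
    klBern a b = (a * Real.log a - a * Real.log b)
      + ((1 - a) * Real.log (1 - a) - (1 - a) * Real.log (1 - b)) := by
  have h1 : a * Real.log (a / b) = a * Real.log a - a * Real.log b := by
    rcases eq_or_ne a 0 with h | h
    · simp [h]
    · rw [Real.log_div h hb0]; ring
  have h2 : (1 - a) * Real.log ((1 - a) / (1 - b))
      = (1 - a) * Real.log (1 - a) - (1 - a) * Real.log (1 - b) := by
    rcases eq_or_ne a 1 with h | h
    · simp [h]
    · rw [Real.log_div (sub_ne_zero.2 (Ne.symm h)) (sub_ne_zero.2 (Ne.symm hb1))]; ring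
  rw [klBern, h1, h2]

lemma continuous_klBern_left {b : ℝ} (hb0 : b ≠ 0) (hb1 : b ≠ 1) :
    Continuous fun a => klBern a b := by
  have h : (fun a => klBern a b) = fun a =>
      (a * Real.log a - a * Real.log b)
      + ((1 - a) * Real.log (1 - a) - (1 - a) * Real.log (1 - b)) := by
    funext a; exact klBern_eq' a b hb0 hb1
  rw [h]
  have h1 : Continuous fun a : ℝ => a * Real.log a := Real.continuous_mul_log
  have h2 : Continuous fun a : ℝ => (1 - a) * Real.log (1 - a) :=
    Real.continuous_mul_log.comp (continuous_const.sub continuous_id)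
  fun_prop

lemma continuousAt_klBern_right (a : ℝ) {b : ℝ} (hb0 : b ≠ 0) (hb1 : b ≠ 1) :
    ContinuousAt (fun x => klBern a x) b := by
  have hev : ∀ᶠ x in nhds b, klBern a x =
      (a * Real.log a - a * Real.log x)
      + ((1 - a) * Real.log (1 - a) - (1 - a) * Real.log (1 - x)) := by
    have h0 : ∀ᶠ x : ℝ in nhds b, x ≠ 0 := eventually_ne_nhds hb0
    have h1 : ∀ᶠ x : ℝ in nhds b, x ≠ 1 := eventually_ne_nhds hb1
    filter_upwards [h0, h1] with x hx0 hx1 using klBern_eq' a x hx0 hx1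
  refine ContinuousAt.congr ?_ (hev.mono fun x hx => hx.symm)
  have hl : ContinuousAt Real.log b := Real.continuousAt_log hb0
  have hl2 : ContinuousAt (fun x : ℝ => Real.log (1 - x)) b :=
    (Real.continuousAt_log (sub_ne_zero.2 (Ne.symm hb1))).comp
      (continuous_const.sub continuous_id).continuousAt
  fun_prop

lemma klBern_self {b : ℝ} (hb0 : b ≠ 0) (hb1 : b ≠ 1) : klBern b b = 0 := by
  simp [klBern, div_self hb0, div_self (sub_ne_zero.2 (Ne.symm hb1))]

theorem kl_ucb_lower_confidence_bound
    {Ω : Type*} [MeasurableSpace Ω] (P : Measure Ω) [IsProbabilityMeasure P]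
    (n : ℕ) (hn : 0 < n) (μ : ℝ) (hμ : μ ∈ Set.Ioo (0 : ℝ) 1)
    (X : Fin n → Ω → ℝ)
    (hmeas : ∀ i, Measurable (X i))
    (hindep : iIndepFun X P)
    (h01 : ∀ i ω, X i ω = 0 ∨ X i ω = 1)
    (hmean : ∀ i, ∫ ω, X i ω ∂P = μ)
    (muhat : Ω → ℝ) (hmuhat : ∀ ω, muhat ω = (1 / n : ℝ) * ∑ i, X i ω)
    (α : ℝ) (hα : 0 < α)
    (ptilde : Ω → ℝ)
    (hptilde : ∀ ω, IsGreatest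
      {p : ℝ | p ∈ Set.Icc (muhat ω) 1 ∧ klBernE (muhat ω) p ≤ (α : EReal)}
      (ptilde ω)) :
    P {ω | ptilde ω ≤ μ} ≤ ENNReal.ofReal (Real.exp (-(n : ℝ) * α)) := by
  obtain ⟨hμ0, hμ1⟩ := hμ
  have hμ0' : μ ≠ 0 := ne_of_gt hμ0
  have hμ1' : μ ≠ 1 := ne_of_lt hμ1
  have h1μ : (0:ℝ) < 1 - μ := by linarith
  have hnpos : (0:ℝ) < n := by exact_mod_cast hn
  have hX0 : ∀ i ω, 0 ≤ X i ω := fun i ω => by rcases h01 i ω with h | h <;> simp [h]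
  have hX1 : ∀ i ω, X i ω ≤ 1 := fun i ω => by rcases h01 i ω with h | h <;> simp [h]
  have hsum0 : ∀ ω, 0 ≤ ∑ i, X i ω := fun ω => Finset.sum_nonneg fun i _ => hX0 i ω
  have hsumn : ∀ ω, ∑ i, X i ω ≤ (n:ℝ) := fun ω => by
    calc ∑ i, X i ω ≤ ∑ _i : Fin n, (1:ℝ) := Finset.sum_le_sum fun i _ => hX1 i ω
    _ = (n:ℝ) := by simp
  have hmu01 : ∀ ω, 0 ≤ muhat ω := by
    intro ω; rw [hmuhat ω]; exact mul_nonneg (by positivity) (hsum0 ω)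
  -- Step 1: reduce to the event about muhat
  set A : Set Ω := {ω | muhat ω ≤ μ ∧ α ≤ klBern (muhat ω) μ} with hA
  have hsubset : {ω | ptilde ω ≤ μ} ⊆ A := by
    intro ω hω
    simp only [Set.mem_setOf_eq] at hω
    obtain ⟨⟨⟨hle1, hle2⟩, hkl⟩, hub⟩ := hptilde ω
    have hmm : muhat ω ≤ μ := le_trans hle1 hω
    refine ⟨hmm, ?_⟩
    by_contra hcon
    push_neg at hcon
    have hcont := continuousAt_klBern_right (muhat ω) hμ0' hμ1'
    have hev : (fun x => klBern (muhat ω) x) ⁻¹' Set.Iio α ∈ nhds μ :=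
      hcont.preimage_mem_nhds (Iio_mem_nhds hcon)
    have hev' : (fun x => klBern (muhat ω) x) ⁻¹' Set.Iio α ∈ nhdsWithin μ (Set.Ioi μ) :=
      nhdsWithin_le_nhds hev
    have hIoo : Set.Ioo μ 1 ∈ nhdsWithin μ (Set.Ioi μ) :=
      Ioo_mem_nhdsGT_of_mem ⟨le_refl μ, hμ1⟩
    obtain ⟨p, hpkl, hpμ, hp1⟩ := Filter.nonempty_of_mem (Filter.inter_mem hev' hIoo)
    have hpkl' : klBern (muhat ω) p < α := hpkl
    have hpset : p ∈ {p : ℝ | p ∈ Set.Icc (muhat ω) 1 ∧ klBernE (muhat ω) p ≤ (α : EReal)} := by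
      refine ⟨⟨le_trans hmm (le_of_lt hpμ), le_of_lt hp1⟩, ?_⟩
      rw [klBernE, if_neg]
      · exact_mod_cast le_of_lt hpkl'
      · rintro ⟨h1, -⟩; exact (ne_of_lt hp1) h1
    have hple := hub hpset
    linarith
  -- Step 2: the threshold x₀
  set S : Set ℝ := {x | x ∈ Set.Icc 0 μ ∧ α ≤ klBern x μ} with hS
  rcases S.eq_empty_or_nonempty with hSe | hSne
  · have hempty : {ω | ptilde ω ≤ μ} ⊆ (∅ : Set Ω) := by
      intro ω hω
      have hmem : muhat ω ∈ S := ⟨⟨hmu01 ω, (hsubset hω).1⟩, (hsubset hω).2⟩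
      rw [hSe] at hmem; exact hmem
    calc P {ω | ptilde ω ≤ μ} ≤ P ∅ := measure_mono hempty
      _ = 0 := measure_empty
      _ ≤ _ := by positivity
  have hSclosed : IsClosed S := by
    have h1 : IsClosed (Set.Icc (0:ℝ) μ) := isClosed_Icc
    have h2 : IsClosed {x : ℝ | α ≤ klBern x μ} :=
      isClosed_le continuous_const (continuous_klBern_left hμ0' hμ1')
    exact h1.inter h2
  have hSbdd : BddAbove S := ⟨μ, fun x hx => hx.1.2⟩
  set x₀ := sSup S with hx₀
  have hx₀S : x₀ ∈ S := hSclosed.csSup_mem hSne hSbdd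
  have hx₀0 : 0 ≤ x₀ := hx₀S.1.1
  have hx₀μ : x₀ ≤ μ := hx₀S.1.2
  have hx₀α : α ≤ klBern x₀ μ := hx₀S.2
  have hx₀lt : x₀ < μ := lt_of_le_of_ne hx₀μ (by
    intro h; rw [h, klBern_self hμ0' hμ1'] at hx₀α; linarith)
  have hAsub : A ⊆ {ω | ∑ i, X i ω ≤ (n:ℝ) * x₀} := by
    intro ω hω
    have hmem : muhat ω ∈ S := ⟨⟨hmu01 ω, hω.1⟩, hω.2⟩
    have h1 : muhat ω ≤ x₀ := le_csSup hSbdd hmem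
    have h2 : (∑ i, X i ω) = (n:ℝ) * muhat ω := by
      rw [hmuhat ω]; field_simp
    rw [Set.mem_setOf_eq, h2]
    exact mul_le_mul_of_nonneg_left h1 (le_of_lt hnpos)
  -- Step 3: Chernoff machinery
  have hXint : ∀ i, Integrable (X i) P := by
    intro i
    refine (integrable_const (1:ℝ)).mono' (hmeas i).aestronglyMeasurable ?_
    exact Filter.Eventually.of_forall fun ω => by
      rw [Real.norm_eq_abs, abs_of_nonneg (hX0 i ω)]; exact hX1 i ω
  have hexp_eq : ∀ (t : ℝ) (i : Fin n) ω,
      Real.exp (t * X i ω) = 1 + (Real.exp t - 1) * X i ω := by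
    intro t i ω
    rcases h01 i ω with h | h <;> simp [h]
  have hmgfi : ∀ (t : ℝ) (i : Fin n), mgf (X i) P t = 1 - μ + μ * Real.exp t := by
    intro t i
    rw [mgf]
    calc ∫ ω, Real.exp (t * X i ω) ∂P = ∫ ω, (1 + (Real.exp t - 1) * X i ω) ∂P := by
          congr 1; funext ω; exact hexp_eq t i ω
      _ = 1 + (Real.exp t - 1) * μ := by
          rw [integral_add (integrable_const 1) ((hXint i).const_mul _),
            integral_const, integral_const_mul, hmean i]
          simp
      _ = 1 - μ + μ * Real.exp t := by ring
  have hkey : ∀ t : ℝ, t ≤ 0 → ∀ c : ℝ,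
      (P {ω | ∑ i, X i ω ≤ c}).toReal
        ≤ Real.exp (-t * c) * (1 - μ + μ * Real.exp t) ^ n := by
    intro t ht c
    have hYmeas : Measurable fun ω => (∑ i, X i) ω := by
      have : (fun ω => (∑ i, X i) ω) = fun ω => ∑ i, X i ω := by
        funext ω; simp [Finset.sum_apply]
      rw [this]
      exact Finset.measurable_sum _ fun i _ => hmeas i
    have hYint : Integrable (fun ω => Real.exp (t * (∑ i, X i) ω)) P := by
      refine (integrable_const (Real.exp (|t| * n))).mono'
        ((measurable_const.mul hYmeas).exp).aestronglyMeasurable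
        (Filter.Eventually.of_forall fun ω => ?_)
      rw [Real.norm_eq_abs, Real.abs_exp]
      apply Real.exp_le_exp.mpr
      have hYeq : (∑ i, X i) ω = ∑ i, X i ω := by simp [Finset.sum_apply]
      have h1 : |t * (∑ i, X i) ω| ≤ |t| * n := by
        rw [abs_mul]
        refine mul_le_mul_of_nonneg_left ?_ (abs_nonneg t)
        rw [hYeq, abs_of_nonneg (hsum0 ω)]
        exact hsumn ω
      exact le_trans (le_abs_self _) h1
    have hcher := measure_le_le_exp_mul_mgf (X := ∑ i, X i) (μ := P) c ht hYint
    have hmgfsum : mgf (∑ i, X i) P t = (1 - μ + μ * Real.exp t) ^ n := by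
      have := hindep.mgf_sum (t := t) hmeas Finset.univ
      rw [this]
      simp [hmgfi t]
    have hset : {ω | (∑ i, X i) ω ≤ c} = {ω | ∑ i, X i ω ≤ c} := by
      ext ω; simp [Finset.sum_apply]
    rw [hmgfsum, hset] at hcher
    exact hcher
  -- Step 4: the final real bound
  have hfinal : (P {ω | ∑ i, X i ω ≤ (n:ℝ) * x₀}).toReal ≤ Real.exp (-(n:ℝ) * α) := by
    rcases eq_or_lt_of_le hx₀0 with h0 | h0
    · -- x₀ = 0
      have hkl0 : klBern x₀ μ = -Real.log (1 - μ) := by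
        rw [← h0]
        simp [klBern, one_div, Real.log_inv]
      have hloga : α ≤ -Real.log (1 - μ) := hkl0 ▸ hx₀α
      have heq : (fun t : ℝ => Real.exp (-t * ((n:ℝ) * x₀)) * (1 - μ + μ * Real.exp t) ^ n)
          = fun t => (1 - μ + μ * Real.exp t) ^ n := by
        funext t; rw [← h0]; simp
      have htend : Filter.Tendsto
          (fun t : ℝ => Real.exp (-t * ((n:ℝ) * x₀)) * (1 - μ + μ * Real.exp t) ^ n)
          Filter.atBot (nhds ((1 - μ) ^ n)) := by
        rw [heq]
        have h2 : Filter.Tendsto (fun t : ℝ => μ * Real.exp t) Filter.atBot (nhds 0) := by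
          simpa using Real.tendsto_exp_atBot.const_mul μ
        have h1 : Filter.Tendsto (fun t : ℝ => 1 - μ + μ * Real.exp t)
            Filter.atBot (nhds (1 - μ)) := by
          simpa using tendsto_const_nhds.add h2
        exact h1.pow n
      have hle : ∀ᶠ t in Filter.atBot,
          (P {ω | ∑ i, X i ω ≤ (n:ℝ) * x₀}).toReal
            ≤ Real.exp (-t * ((n:ℝ) * x₀)) * (1 - μ + μ * Real.exp t) ^ n := by
        filter_upwards [Filter.eventually_le_atBot (0:ℝ)] with t ht using hkey t ht _
      have hlim : (P {ω | ∑ i, X i ω ≤ (n:ℝ) * x₀}).toReal ≤ (1 - μ) ^ n :=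
        ge_of_tendsto htend hle
      calc (P {ω | ∑ i, X i ω ≤ (n:ℝ) * x₀}).toReal ≤ (1 - μ) ^ n := hlim
        _ = Real.exp ((n:ℝ) * Real.log (1 - μ)) := by
            rw [Real.exp_nat_mul, Real.exp_log h1μ]
        _ ≤ Real.exp (-(n:ℝ) * α) := by
            apply Real.exp_le_exp.mpr
            have hn0 : (0:ℝ) ≤ n := le_of_lt hnpos
            nlinarith
    · -- 0 < x₀
      set t := Real.log (x₀ / μ) + Real.log ((1 - μ) / (1 - x₀)) with htdef
      have h1x₀ : (0:ℝ) < 1 - x₀ := by linarith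
      have hq : (0:ℝ) < (1 - μ) / (1 - x₀) := by positivity
      have hxm : (0:ℝ) < x₀ / μ := by positivity
      have hexpt : Real.exp t = (x₀ / μ) * ((1 - μ) / (1 - x₀)) := by
        rw [htdef, Real.exp_add, Real.exp_log hxm, Real.exp_log hq]
      have ht0 : t ≤ 0 := by
        have hprod : (x₀ / μ) * ((1 - μ) / (1 - x₀)) ≤ 1 := by
          rw [div_mul_div_comm, div_le_one (by positivity)]
          nlinarith
        have : t = Real.log ((x₀ / μ) * ((1 - μ) / (1 - x₀))) := by
          rw [htdef, Real.log_mul (ne_of_gt hxm) (ne_of_gt hq)]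
        rw [this]
        exact Real.log_nonpos (by positivity) hprod
      have hbase : 1 - μ + μ * Real.exp t = (1 - μ) / (1 - x₀) := by
        rw [hexpt]; field_simp; ring
      have hkl : klBern x₀ μ = t * x₀ - Real.log ((1 - μ) / (1 - x₀)) := by
        rw [klBern, htdef]
        have h2 : Real.log ((1 - x₀) / (1 - μ)) = -Real.log ((1 - μ) / (1 - x₀)) := by
          rw [← Real.log_inv, inv_div]
        rw [h2]; ring
      have hcalc : Real.exp (-t * ((n:ℝ) * x₀)) * (1 - μ + μ * Real.exp t) ^ n
          = Real.exp (-(n:ℝ) * klBern x₀ μ) := by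
        rw [hbase, ← Real.exp_log hq, ← Real.exp_nat_mul, ← Real.exp_add, hkl]
        congr 1; ring
      calc (P {ω | ∑ i, X i ω ≤ (n:ℝ) * x₀}).toReal
            ≤ Real.exp (-t * ((n:ℝ) * x₀)) * (1 - μ + μ * Real.exp t) ^ n :=
              hkey t ht0 _
        _ = Real.exp (-(n:ℝ) * klBern x₀ μ) := hcalc
        _ ≤ Real.exp (-(n:ℝ) * α) := by
            apply Real.exp_le_exp.mpr
            have hn0 : (0:ℝ) ≤ n := le_of_lt hnpos
            nlinarith
  -- Conclusion
  calc P {ω | ptilde ω ≤ μ} ≤ P {ω | ∑ i, X i ω ≤ (n:ℝ) * x₀} :=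
        measure_mono (hsubset.trans hAsub)
    _ = ENNReal.ofReal ((P {ω | ∑ i, X i ω ≤ (n:ℝ) * x₀}).toReal) :=
        (ENNReal.ofReal_toReal (measure_ne_top _ _)).symm
    _ ≤ ENNReal.ofReal (Real.exp (-(n:ℝ) * α)) := ENNReal.ofReal_le_ofReal hfinal
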